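/- Let uV, uF : ℤ × ℤ → (Fin 3 → ℝ) with ‖u(d)‖ = 1 for every vertex and face d, and suppose ⟪uV(v), uF(f)⟫ ≠ 0 for every incident vertex–face pair (v, f). Then there exist nowhere-zero functions σV, σF : ℤ × ℤ → ℝ with ⟪uV(v), uF(f)⟫ = σV(v)·σF(f) for every incident pair (v, f), if and only if for every v ∈ ℤ × ℤ one has ⟪uV(v) ×₃ uV(v+(1,0)), uF(v−(0,1)) ×₃ uF(v)⟫ = 0 and ⟪uV(v) ×₃ uV(v+(0,1)), uF(v−(1,0)) ×₃ uF(v)⟫ = 0, where ×₃ is the cross product on ℝ³. (A bi*net with unit normals u admits a normal binet n(d) = u(d)/σ(d), a polar binet with respect to the unit sphere, if and only if it is an orthogonal bi*net, i.e. the intersection lines of the planes at dual edges are orthogonal.) -/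

import Mathlib

open Matrix

/-- A vertex `v` is incident to the face labeled `f` if `v` is one of its four corners. -/
def Incident (v f : ℤ × ℤ) : Prop :=
  v = f ∨ v = f + (1, 0) ∨ v = f + (0, 1) ∨ v = f + (1, 1)


private lemma my_cross_dot (a b c d : Fin 3 → ℝ) :
    (a ⨯₃ b) ⬝ᵥ (c ⨯₃ d) = (a ⬝ᵥ c) * (b ⬝ᵥ d) - (a ⬝ᵥ d) * (b ⬝ᵥ c) := by
  simp [cross_apply, dotProduct, Fin.sum_univ_three]
  ring

noncomputable def myZp (r : ℤ → ℝ) : ℤ → ℝ := fun n =>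
  if 0 ≤ n then ∏ k ∈ Finset.range n.toNat, r k
  else (∏ k ∈ Finset.range (-n).toNat, r (-(k : ℤ) - 1))⁻¹

lemma myZp_zero (r : ℤ → ℝ) : myZp r 0 = 1 := by simp [myZp]

lemma myZp_ne_zero (r : ℤ → ℝ) (hr : ∀ n, r n ≠ 0) (n : ℤ) : myZp r n ≠ 0 := by
  unfold myZp
  split
  · exact Finset.prod_ne_zero_iff.2 fun k _ => hr _
  · exact inv_ne_zero (Finset.prod_ne_zero_iff.2 fun k _ => hr _)

lemma myZp_succ (r : ℤ → ℝ) (hr : ∀ n, r n ≠ 0) (n : ℤ) :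
    myZp r (n + 1) = myZp r n * r n := by
  rcases le_or_gt 0 n with h | h
  · rw [myZp, myZp, if_pos (by omega), if_pos h]
    have : (n + 1).toNat = n.toNat + 1 := by omega
    rw [this, Finset.prod_range_succ, Int.toNat_of_nonneg h]
  · rcases eq_or_lt_of_le (by omega : n ≤ -1) with h1 | h1
    · subst h1
      rw [myZp, myZp, if_pos (by omega), if_neg (by omega)]
      norm_num [Finset.prod_range_succ]
      exact (inv_mul_cancel₀ (hr _)).symm
    · rw [myZp, myZp, if_neg (by omega), if_neg (by omega)]
      have hm : (-n).toNat = (-(n + 1)).toNat + 1 := by omega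
      rw [hm, Finset.prod_range_succ]
      have : (-(↑(-(n + 1)).toNat : ℤ) - 1) = n := by omega
      rw [this, mul_inv, mul_assoc, inv_mul_cancel₀ (hr _), mul_one]

lemma sigma_exists (rX rY : ℤ × ℤ → ℝ) (hX : ∀ v, rX v ≠ 0) (hY : ∀ v, rY v ≠ 0)
    (hplaq : ∀ v, rX v * rY (v + (1, 0)) = rY v * rX (v + (0, 1))) :
    ∃ σ : ℤ × ℤ → ℝ, (∀ v, σ v ≠ 0) ∧ (∀ v, σ (v + (1, 0)) = σ v * rX v) ∧
      (∀ v, σ (v + (0, 1)) = σ v * rY v) := by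
  have hplaq' : ∀ x y : ℤ, rX (x, y) * rY (x + 1, y) = rY (x, y) * rX (x, y + 1) := by
    intro x y
    have := hplaq (x, y)
    simpa [Prod.ext_iff] using this
  refine ⟨fun v => myZp (fun k => rX (k, 0)) v.1 * myZp (fun k => rY (v.1, k)) v.2,
    fun v => mul_ne_zero (myZp_ne_zero _ (fun n => hX _) _) (myZp_ne_zero _ (fun n => hY _) _),
    ?_, ?_⟩
  · -- horizontal
    have key : ∀ x y : ℤ, rX (x, 0) * myZp (fun k => rY (x + 1, k)) y
        = myZp (fun k => rY (x, k)) y * rX (x, y) := by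
      intro x y
      induction y using Int.induction_on with
      | zero => simp [myZp_zero]
      | succ i ih =>
        rw [myZp_succ _ (fun n => hY _), myZp_succ _ (fun n => hY _)]
        linear_combination rY (x + 1, (i : ℤ)) * ih +
          myZp (fun k => rY (x, k)) (i : ℤ) * hplaq' x i
      | pred i ih =>
        have h1 : (-(i:ℤ) - 1) + 1 = -(i:ℤ) := by ring
        have h2 := myZp_succ (fun k => rY (x + 1, k)) (fun n => hY _) (-(i:ℤ) - 1)
        have h3 := myZp_succ (fun k => rY (x, k)) (fun n => hY _) (-(i:ℤ) - 1)
        rw [h1] at h2 h3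
        have hp := hplaq' x (-(i:ℤ) - 1)
        rw [h1] at hp
        have hcancel := hY (x + 1, -(i:ℤ) - 1)
        rw [h2, h3] at ih
        have key2 : rX (x, 0) * myZp (fun k => rY (x + 1, k)) (-(i:ℤ) - 1)
            * rY (x + 1, -(i:ℤ) - 1)
            = myZp (fun k => rY (x, k)) (-(i:ℤ) - 1) * rX (x, -(i:ℤ) - 1)
            * rY (x + 1, -(i:ℤ) - 1) := by
          linear_combination ih - myZp (fun k => rY (x, k)) (-(i:ℤ) - 1) * hp
        exact mul_right_cancel₀ hcancel key2
    intro v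
    have h1 : (v + ((1 : ℤ), (0 : ℤ))).1 = v.1 + 1 := rfl
    have h2 : (v + ((1 : ℤ), (0 : ℤ))).2 = v.2 := by simp
    simp only [h1, h2, myZp_succ _ (fun n => hX _) v.1]
    have := key v.1 v.2
    calc myZp (fun k => rX (k, 0)) v.1 * rX (v.1, 0) * myZp (fun k => rY (v.1 + 1, k)) v.2
        = myZp (fun k => rX (k, 0)) v.1 *
            (rX (v.1, 0) * myZp (fun k => rY (v.1 + 1, k)) v.2) := by ring
      _ = myZp (fun k => rX (k, 0)) v.1 * (myZp (fun k => rY (v.1, k)) v.2 * rX (v.1, v.2)) := by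
            rw [this]
      _ = myZp (fun k => rX (k, 0)) v.1 * myZp (fun k => rY (v.1, k)) v.2 * rX v := by
            rw [← mul_assoc]
  · -- vertical
    intro v
    have h1 : (v + ((0 : ℤ), (1 : ℤ))).1 = v.1 := by simp
    have h2 : (v + ((0 : ℤ), (1 : ℤ))).2 = v.2 + 1 := rfl
    simp only [h1, h2, myZp_succ _ (fun n => hY _) v.2, ← mul_assoc]

/-- A bi*net given by unit normals `u` admits a normal binet `n(d) = u(d)/σ(d)` (a polar binet
with respect to the unit sphere, i.e. `⟪u v, u f⟫ = σ(v)σ(f)` for incident pairs with `σ`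
nowhere zero) if and only if it is an orthogonal bi*net: the intersection lines of the planes
at dual edges of every cross are orthogonal. -/
theorem stmt_7 (uV uF : ℤ × ℤ → Fin 3 → ℝ)
    (huV : ∀ d : ℤ × ℤ, uV d ⬝ᵥ uV d = 1) (huF : ∀ d : ℤ × ℤ, uF d ⬝ᵥ uF d = 1)
    (hne : ∀ v f : ℤ × ℤ, Incident v f → uV v ⬝ᵥ uF f ≠ 0) :
    (∃ σV σF : ℤ × ℤ → ℝ, (∀ v : ℤ × ℤ, σV v ≠ 0) ∧ (∀ f : ℤ × ℤ, σF f ≠ 0) ∧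
        ∀ v f : ℤ × ℤ, Incident v f → uV v ⬝ᵥ uF f = σV v * σF f) ↔
      (∀ v : ℤ × ℤ,
        (uV v ⨯₃ uV (v + (1, 0))) ⬝ᵥ (uF (v - (0, 1)) ⨯₃ uF v) = 0 ∧
        (uV v ⨯₃ uV (v + (0, 1))) ⬝ᵥ (uF (v - (1, 0)) ⨯₃ uF v) = 0) := by
  set c : ℤ × ℤ → ℤ × ℤ → ℝ := fun v f => uV v ⬝ᵥ uF f with hc
  have inc00 : ∀ f : ℤ × ℤ, Incident f f := fun f => Or.inl rfl
  have inc10 : ∀ f : ℤ × ℤ, Incident (f + (1, 0)) f := fun f => Or.inr (Or.inl rfl)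
  have inc01 : ∀ f : ℤ × ℤ, Incident (f + (0, 1)) f := fun f => Or.inr (Or.inr (Or.inl rfl))
  have inc11 : ∀ f : ℤ × ℤ, Incident (f + (1, 1)) f := fun f => Or.inr (Or.inr (Or.inr rfl))
  have keyX : ∀ v : ℤ × ℤ, (uV v ⨯₃ uV (v + (1, 0))) ⬝ᵥ (uF (v - (0, 1)) ⨯₃ uF v)
      = c v (v - (0, 1)) * c (v + (1, 0)) v - c v v * c (v + (1, 0)) (v - (0, 1)) := fun v =>
    my_cross_dot _ _ _ _
  have keyY : ∀ v : ℤ × ℤ, (uV v ⨯₃ uV (v + (0, 1))) ⬝ᵥ (uF (v - (1, 0)) ⨯₃ uF v)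
      = c v (v - (1, 0)) * c (v + (0, 1)) v - c v v * c (v + (0, 1)) (v - (1, 0)) := fun v =>
    my_cross_dot _ _ _ _
  constructor
  · rintro ⟨σV, σF, hσV, hσF, h⟩ v
    have e1 : c v (v - (0, 1)) = σV v * σF (v - (0, 1)) := h _ _ (by
      right; right; left; ext <;> simp)
    have e2 : c (v + (1, 0)) v = σV (v + (1, 0)) * σF v := h _ _ (inc10 v)
    have e3 : c v v = σV v * σF v := h _ _ (inc00 v)
    have e4 : c (v + (1, 0)) (v - (0, 1)) = σV (v + (1, 0)) * σF (v - (0, 1)) := h _ _ (by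
      right; right; right; ext <;> simp)
    have f1 : c v (v - (1, 0)) = σV v * σF (v - (1, 0)) := h _ _ (by
      right; left; ext <;> simp)
    have f2 : c (v + (0, 1)) v = σV (v + (0, 1)) * σF v := h _ _ (inc01 v)
    have f4 : c (v + (0, 1)) (v - (1, 0)) = σV (v + (0, 1)) * σF (v - (1, 0)) := h _ _ (by
      right; right; right; ext <;> simp)
    rw [keyX v, keyY v, e1, e2, e3, e4, f1, f2, f4]
    constructor <;> ring
  · intro H
    have HX : ∀ v : ℤ × ℤ, c v (v - (0, 1)) * c (v + (1, 0)) v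
        = c v v * c (v + (1, 0)) (v - (0, 1)) := by
      intro v; have := (H v).1; rw [keyX v] at this; linarith
    have HY : ∀ v : ℤ × ℤ, c v (v - (1, 0)) * c (v + (0, 1)) v
        = c v v * c (v + (0, 1)) (v - (1, 0)) := by
      intro v; have := (H v).2; rw [keyY v] at this; linarith
    set rX : ℤ × ℤ → ℝ := fun v => c (v + (1, 0)) v / c v v with hrX
    set rY : ℤ × ℤ → ℝ := fun v => c (v + (0, 1)) v / c v v with hrY
    have hcne : ∀ v f, Incident v f → c v f ≠ 0 := hne
    have hX0 : ∀ v, rX v ≠ 0 := fun v =>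
      div_ne_zero (hcne _ _ (inc10 v)) (hcne _ _ (inc00 v))
    have hY0 : ∀ v, rY v ≠ 0 := fun v =>
      div_ne_zero (hcne _ _ (inc01 v)) (hcne _ _ (inc00 v))
    -- alternate formulas for the ratios using the other face
    have hXalt : ∀ v : ℤ × ℤ, rX v * c v (v - (0, 1)) = c (v + (1, 0)) (v - (0, 1)) := by
      intro v
      simp only [hrX]
      rw [div_mul_eq_mul_div, div_eq_iff (hcne _ _ (inc00 v))]
      linear_combination HX v
    have hYalt : ∀ v : ℤ × ℤ, rY v * c v (v - (1, 0)) = c (v + (0, 1)) (v - (1, 0)) := by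
      intro v
      simp only [hrY]
      rw [div_mul_eq_mul_div, div_eq_iff (hcne _ _ (inc00 v))]
      linear_combination HY v
    -- plaquette relation
    have hplaq : ∀ v, rX v * rY (v + (1, 0)) = rY v * rX (v + (0, 1)) := by
      intro v
      -- rY (v+(1,0)) = c (v+(1,1)) v / c (v+(1,0)) v
      have e1 : rY (v + (1, 0)) * c (v + (1, 0)) v = c (v + (1, 1)) v := by
        have := hYalt (v + (1, 0))
        have h1 : v + (1, 0) - (1, 0) = v := by ext <;> simp
        have h2 : v + (1, 0) + (0, 1) = v + (1, 1) := by ext <;> simp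
        rw [h1, h2] at this; exact this
      have e2 : rX (v + (0, 1)) * c (v + (0, 1)) v = c (v + (1, 1)) v := by
        have := hXalt (v + (0, 1))
        have h1 : v + (0, 1) - (0, 1) = v := by ext <;> simp
        have h2 : v + (0, 1) + (1, 0) = v + (1, 1) := by ext <;> simp
        rw [h1, h2] at this; exact this
      have d1 : rX v * c v v = c (v + (1, 0)) v := by
        simp only [hrX]; exact div_mul_cancel₀ _ (hcne _ _ (inc00 v))
      have d2 : rY v * c v v = c (v + (0, 1)) v := by
        simp only [hrY]; exact div_mul_cancel₀ _ (hcne _ _ (inc00 v))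
      have hc0 := hcne _ _ (inc00 v)
      have hc1 := hcne _ _ (inc10 v)
      have hc2 := hcne _ _ (inc01 v)
      -- rX v * rY (v+(1,0)) = c(v+1,1) v / c v v = rY v * rX (v+(0,1))
      have : rX v * rY (v + (1, 0)) * c v v = c (v + (1, 1)) v := by
        calc rX v * rY (v + (1, 0)) * c v v
            = rY (v + (1, 0)) * (rX v * c v v) := by ring
          _ = rY (v + (1, 0)) * c (v + (1, 0)) v := by rw [d1]
          _ = c (v + (1, 1)) v := e1
      have that : rY v * rX (v + (0, 1)) * c v v = c (v + (1, 1)) v := by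
        calc rY v * rX (v + (0, 1)) * c v v
            = rX (v + (0, 1)) * (rY v * c v v) := by ring
          _ = rX (v + (0, 1)) * c (v + (0, 1)) v := by rw [d2]
          _ = c (v + (1, 1)) v := e2
      have := this.trans that.symm
      exact mul_right_cancel₀ hc0 this
    obtain ⟨σ, hσ0, hσX, hσY⟩ := sigma_exists rX rY hX0 hY0 hplaq
    refine ⟨σ, fun f => c f f / σ f, hσ0, fun f => div_ne_zero (hcne _ _ (inc00 f)) (hσ0 f),
      ?_⟩
    intro v f hvf
    have hσf := hσ0 f
    have hs : σ f * (c f f / σ f) = c f f := by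
      field_simp
    have d1 : rX f * c f f = c (f + (1, 0)) f := by
      simp only [hrX]; exact div_mul_cancel₀ _ (hcne _ _ (inc00 f))
    have d2 : rY f * c f f = c (f + (0, 1)) f := by
      simp only [hrY]; exact div_mul_cancel₀ _ (hcne _ _ (inc00 f))
    rcases hvf with rfl | rfl | rfl | rfl
    · show c v v = σ v * (c v v / σ v)
      rw [hs]
    · show c (f + (1, 0)) f = σ (f + (1, 0)) * (c f f / σ f)
      rw [hσX f]
      calc c (f + (1, 0)) f = rX f * c f f := d1.symm
        _ = rX f * (σ f * (c f f / σ f)) := by rw [hs]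
        _ = σ f * rX f * (c f f / σ f) := by ring
    · show c (f + (0, 1)) f = σ (f + (0, 1)) * (c f f / σ f)
      rw [hσY f]
      calc c (f + (0, 1)) f = rY f * c f f := d2.symm
        _ = rY f * (σ f * (c f f / σ f)) := by rw [hs]
        _ = σ f * rY f * (c f f / σ f) := by ring
    · show c (f + (1, 1)) f = σ (f + (1, 1)) * (c f f / σ f)
      have h11 : f + (1, 1) = f + (1, 0) + (0, 1) := by ext <;> simp
      have e1 : rY (f + (1, 0)) * c (f + (1, 0)) f = c (f + (1, 1)) f := by
        have := hYalt (f + (1, 0))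
        have ha : f + (1, 0) - (1, 0) = f := by ext <;> simp
        have hb : f + (1, 0) + (0, 1) = f + (1, 1) := by ext <;> simp
        rw [ha, hb] at this; exact this
      rw [h11, hσY (f + (1, 0)), hσX f]
      calc c (f + (1, 0) + (0, 1)) f = c (f + (1, 1)) f := by rw [← h11]
        _ = rY (f + (1, 0)) * c (f + (1, 0)) f := e1.symm
        _ = rY (f + (1, 0)) * (rX f * c f f) := by rw [← d1]
        _ = rY (f + (1, 0)) * (rX f * (σ f * (c f f / σ f))) := by rw [hs]
        _ = σ f * rX f * rY (f + (1, 0)) * (c f f / σ f) := by ring
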